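/- Gradient representation: in the zero-range setting with Λ = Λ₁ ∪ Λ₂, for every f and every n ∈ {1,…,N}, ν_Λ^N[f|η̄_{Λ₁}=n] − ν_Λ^N[f|η̄_{Λ₁}=n−1] = (γ(n−1)/(n γ(n)))·( ν_Λ^N[ c(η_y) ∑_{x∈Λ₁} h(η_x) ∂_{yx}f | η̄_{Λ₁}=n−1 ] + ν_Λ^N[ f, c(η_y) ∑_{x∈Λ₁} h(η_x) | η̄_{Λ₁}=n−1 ] ), where ∂_{yx}f(η) = f(η−δ_y+δ_x)−f(η), h(k)=(k+1)/c(k+1), γ(n)=ν_Λ^N[η̄_{Λ₁}=n], and y ∈ Λ₂ is arbitrary. -/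

import Mathlib

open Finset

/-- `cfact c n = c(1)⋯c(n)`, with `cfact c 0 = 1`. -/
noncomputable def cfact (c : ℕ → ℝ) (n : ℕ) : ℝ := ∏ k ∈ Finset.range n, c (k + 1)

/-- Expectation of `f` under the canonical zero-range measure `ν_Λ^N` conditioned on
`η̄_{Λ₁} = n`. -/
noncomputable def condExp (c : ℕ → ℝ) {Λ : Type*} [Fintype Λ] [DecidableEq Λ]
    (Λ₁ : Finset Λ) (N n : ℕ) (f : (Λ → ℕ) → ℝ) : ℝ :=
  (∑ σ : Λ → Fin (N + 1),
      if (∑ z, (σ z : ℕ)) = N ∧ (∑ z ∈ Λ₁, (σ z : ℕ)) = n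
      then (∏ z, (cfact c (σ z : ℕ))⁻¹) * f (fun z => (σ z : ℕ)) else 0) /
  (∑ σ : Λ → Fin (N + 1),
      if (∑ z, (σ z : ℕ)) = N ∧ (∑ z ∈ Λ₁, (σ z : ℕ)) = n
      then ∏ z, (cfact c (σ z : ℕ))⁻¹ else 0)

/-- `γ(n) = ν_Λ^N[η̄_{Λ₁} = n]`. -/
noncomputable def gammaFun (c : ℕ → ℝ) {Λ : Type*} [Fintype Λ] [DecidableEq Λ]
    (Λ₁ : Finset Λ) (N n : ℕ) : ℝ :=
  (∑ σ : Λ → Fin (N + 1),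
      if (∑ z, (σ z : ℕ)) = N ∧ (∑ z ∈ Λ₁, (σ z : ℕ)) = n
      then ∏ z, (cfact c (σ z : ℕ))⁻¹ else 0) /
  (∑ σ : Λ → Fin (N + 1),
      if (∑ z, (σ z : ℕ)) = N then ∏ z, (cfact c (σ z : ℕ))⁻¹ else 0)

section ZRAux

variable {Λ : Type*} [Fintype Λ] [DecidableEq Λ]

/-- Sum over ℕ-valued configurations in the box, restricted to level `(N, n)`. -/
noncomputable def Ssum (c : ℕ → ℝ) (Λ₁ : Finset Λ) (N n : ℕ) (g : (Λ → ℕ) → ℝ) : ℝ :=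
  ∑ η ∈ Fintype.piFinset (fun _ : Λ => Finset.range (N + 1)),
    if (∑ z, η z) = N ∧ (∑ z ∈ Λ₁, η z) = n
    then (∏ z, (cfact c (η z))⁻¹) * g η else 0

/-- Full normalizer. -/
noncomputable def Zfull (c : ℕ → ℝ) (Λ : Type*) [Fintype Λ] [DecidableEq Λ] (N : ℕ) : ℝ :=
  ∑ η ∈ Fintype.piFinset (fun _ : Λ => Finset.range (N + 1)),
    if (∑ z, η z) = N then (∏ z, (cfact c (η z))⁻¹) else 0

lemma fin_to_pi (N : ℕ) (F : (Λ → ℕ) → ℝ) :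
    (∑ σ : Λ → Fin (N + 1), F (fun z => (σ z : ℕ))) =
      ∑ η ∈ Fintype.piFinset (fun _ : Λ => Finset.range (N + 1)), F η := by
  apply Finset.sum_nbij' (i := fun σ : Λ → Fin (N + 1) => (fun z => (σ z : ℕ)))
    (j := fun η : Λ → ℕ =>
      (fun z => (⟨η z % (N + 1), Nat.mod_lt _ (Nat.succ_pos N)⟩ : Fin (N + 1))))
  · intro σ _
    simp [Fintype.mem_piFinset]
    exact fun a => Nat.le_of_lt_succ (σ a).isLt
  · intro η _
    exact Finset.mem_univ _
  · intro σ _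
    funext z
    exact Fin.ext (Nat.mod_eq_of_lt (σ z).isLt)
  · intro η hη
    funext z
    exact Nat.mod_eq_of_lt (Finset.mem_range.1 (Fintype.mem_piFinset.1 hη z))
  · intro σ _
    rfl

lemma condExp_eq (c : ℕ → ℝ) (Λ₁ : Finset Λ) (N n : ℕ) (f : (Λ → ℕ) → ℝ) :
    condExp c Λ₁ N n f = Ssum c Λ₁ N n f / Ssum c Λ₁ N n (fun _ => 1) := by
  unfold condExp Ssum
  congr 1
  · exact fin_to_pi N (fun η => if (∑ z, η z) = N ∧ (∑ z ∈ Λ₁, η z) = n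
      then (∏ z, (cfact c (η z))⁻¹) * f η else 0)
  · rw [fin_to_pi N (fun η => if (∑ z, η z) = N ∧ (∑ z ∈ Λ₁, η z) = n
      then (∏ z, (cfact c (η z))⁻¹) else 0)]
    exact Finset.sum_congr rfl fun η _ => by split_ifs <;> simp

lemma gammaFun_eq (c : ℕ → ℝ) (Λ₁ : Finset Λ) (N n : ℕ) :
    gammaFun c Λ₁ N n = Ssum c Λ₁ N n (fun _ => 1) / Zfull c Λ N := by
  unfold gammaFun Ssum Zfull
  congr 1
  · rw [fin_to_pi N (fun η => if (∑ z, η z) = N ∧ (∑ z ∈ Λ₁, η z) = n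
      then (∏ z, (cfact c (η z))⁻¹) else 0)]
    exact Finset.sum_congr rfl fun η _ => by split_ifs <;> simp
  · exact fin_to_pi N (fun η => if (∑ z, η z) = N then (∏ z, (cfact c (η z))⁻¹) else 0)

lemma Ssum_congr (c : ℕ → ℝ) (Λ₁ : Finset Λ) (N n : ℕ) {g₁ g₂ : (Λ → ℕ) → ℝ}
    (h : ∀ η, g₁ η = g₂ η) : Ssum c Λ₁ N n g₁ = Ssum c Λ₁ N n g₂ := by
  unfold Ssum
  exact Finset.sum_congr rfl fun η _ => by rw [h η]

lemma Ssum_sub (c : ℕ → ℝ) (Λ₁ : Finset Λ) (N n : ℕ) (g₁ g₂ : (Λ → ℕ) → ℝ) :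
    Ssum c Λ₁ N n (fun η => g₁ η - g₂ η) = Ssum c Λ₁ N n g₁ - Ssum c Λ₁ N n g₂ := by
  unfold Ssum
  rw [← Finset.sum_sub_distrib]
  exact Finset.sum_congr rfl fun η _ => by split_ifs <;> ring

lemma cfact_pos (c : ℕ → ℝ) (hcpos : ∀ k, 0 < k → 0 < c k) (k : ℕ) : 0 < cfact c k :=
  Finset.prod_pos fun i _ => hcpos _ (Nat.succ_pos i)

lemma Ssum_one_nonneg (c : ℕ → ℝ) (hcpos : ∀ k, 0 < k → 0 < c k) (Λ₁ : Finset Λ) (N n : ℕ) :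
    0 ≤ Ssum c Λ₁ N n (fun _ => 1) := by
  unfold Ssum
  refine Finset.sum_nonneg fun η _ => ?_
  split_ifs
  · have : (0:ℝ) < ∏ z, (cfact c (η z))⁻¹ :=
      Finset.prod_pos fun z _ => inv_pos.2 (cfact_pos c hcpos _)
    simpa using this.le
  · exact le_refl 0

lemma Zfull_nonneg (c : ℕ → ℝ) (hcpos : ∀ k, 0 < k → 0 < c k) (N : ℕ) :
    0 ≤ Zfull c Λ N := by
  unfold Zfull
  refine Finset.sum_nonneg fun η _ => ?_
  split_ifs
  · exact (Finset.prod_pos fun z _ => inv_pos.2 (cfact_pos c hcpos _)).le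
  · exact le_refl 0

end ZRAux
section ZRKey

variable {Λ : Type*} [Fintype Λ] [DecidableEq Λ]

lemma move_sum (x y : Λ) (hxy : x ≠ y) (η : Λ → ℕ) (hy1 : 1 ≤ η y) (s : Finset Λ) :
    (∑ z ∈ s, (if z = x then η x + 1 else if z = y then η y - 1 else η z))
      + (if y ∈ s then 1 else 0) = (∑ z ∈ s, η z) + (if x ∈ s then 1 else 0) := by
  rw [← Finset.sum_ite_eq' s y (fun _ => 1), ← Finset.sum_ite_eq' s x (fun _ => 1),
    ← Finset.sum_add_distrib, ← Finset.sum_add_distrib]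
  refine Finset.sum_congr rfl fun z _ => ?_
  by_cases h1 : z = x
  · subst h1; simp [hxy]
  · by_cases h2 : z = y
    · subst h2
      simp only [if_neg h1, if_pos rfl, if_true]
      omega
    · simp [h1, h2]

lemma zr_key (c : ℕ → ℝ) (hc0 : c 0 = 0) (hcpos : ∀ k, 0 < k → 0 < c k)
    (Λ₁ : Finset Λ) (N n : ℕ) (hn1 : 1 ≤ n)
    (y : Λ) (hy : y ∉ Λ₁) (f : (Λ → ℕ) → ℝ) :
    (n : ℝ) * Ssum c Λ₁ N n f =
      Ssum c Λ₁ N (n - 1) (fun η => c (η y) *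
        ∑ x ∈ Λ₁, (((η x : ℝ) + 1) / c (η x + 1)) *
          f (fun z => if z = x then η x + 1 else if z = y then η y - 1 else η z)) := by
  classical
  unfold Ssum
  rw [Finset.mul_sum]
  have step1 : ∀ η ∈ Fintype.piFinset (fun _ : Λ => Finset.range (N + 1)),
      (n : ℝ) * (if (∑ z, η z) = N ∧ (∑ z ∈ Λ₁, η z) = n
        then (∏ z, (cfact c (η z))⁻¹) * f η else 0) =
      ∑ x ∈ Λ₁, (if (∑ z, η z) = N ∧ (∑ z ∈ Λ₁, η z) = n
        then (∏ z, (cfact c (η z))⁻¹) * ((η x : ℝ) * f η) else 0) := by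
    intro η _
    by_cases h : (∑ z, η z) = N ∧ (∑ z ∈ Λ₁, η z) = n
    · simp only [if_pos h]
      have hcast : ((n : ℝ)) = ∑ x ∈ Λ₁, (η x : ℝ) := by
        rw [← h.2]; push_cast; ring
      rw [hcast, Finset.sum_mul]
      exact Finset.sum_congr rfl fun x _ => by ring
    · simp [if_neg h]
  have step2 : ∀ η ∈ Fintype.piFinset (fun _ : Λ => Finset.range (N + 1)),
      (if (∑ z, η z) = N ∧ (∑ z ∈ Λ₁, η z) = n - 1
        then (∏ z, (cfact c (η z))⁻¹) * (c (η y) *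
          ∑ x ∈ Λ₁, (((η x : ℝ) + 1) / c (η x + 1)) *
            f (fun z => if z = x then η x + 1 else if z = y then η y - 1 else η z)) else 0) =
      ∑ x ∈ Λ₁, (if (∑ z, η z) = N ∧ (∑ z ∈ Λ₁, η z) = n - 1
        then (∏ z, (cfact c (η z))⁻¹) * (c (η y) * ((((η x : ℝ) + 1) / c (η x + 1)) *
          f (fun z => if z = x then η x + 1 else if z = y then η y - 1 else η z))) else 0) := by
    intro η _
    by_cases h : (∑ z, η z) = N ∧ (∑ z ∈ Λ₁, η z) = n - 1
    · rw [if_pos h, Finset.mul_sum, Finset.mul_sum]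
      exact (Finset.sum_congr rfl fun x _ => by rw [if_pos h]).symm
    · simp [if_neg h]
  rw [Finset.sum_congr rfl step1, Finset.sum_congr rfl step2]
  conv_lhs => rw [Finset.sum_comm]
  conv_rhs => rw [Finset.sum_comm]
  refine Finset.sum_congr rfl fun x hx => ?_
  have hxy : x ≠ y := fun h => hy (h ▸ hx)
  have hA : ∀ τ ∈ Fintype.piFinset (fun _ : Λ => Finset.range (N + 1)),
      (if (∑ z, τ z) = N ∧ (∑ z ∈ Λ₁, τ z) = n
        then (∏ z, (cfact c (τ z))⁻¹) * ((τ x : ℝ) * f τ) else 0) ≠ 0 →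
      (((∑ z, τ z) = N ∧ (∑ z ∈ Λ₁, τ z) = n) ∧ 1 ≤ τ x) := by
    intro τ _ hne
    by_cases h : (∑ z, τ z) = N ∧ (∑ z ∈ Λ₁, τ z) = n
    · refine ⟨h, ?_⟩
      by_contra hτ
      have h0 : τ x = 0 := by omega
      exact hne (by rw [if_pos h, h0]; simp)
    · exact absurd (if_neg h) hne
  have hB : ∀ η ∈ Fintype.piFinset (fun _ : Λ => Finset.range (N + 1)),
      (if (∑ z, η z) = N ∧ (∑ z ∈ Λ₁, η z) = n - 1
        then (∏ z, (cfact c (η z))⁻¹) * (c (η y) * ((((η x : ℝ) + 1) / c (η x + 1)) *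
          f (fun z => if z = x then η x + 1 else if z = y then η y - 1 else η z))) else 0) ≠ 0 →
      (((∑ z, η z) = N ∧ (∑ z ∈ Λ₁, η z) = n - 1) ∧ 1 ≤ η y) := by
    intro η _ hne
    by_cases h : (∑ z, η z) = N ∧ (∑ z ∈ Λ₁, η z) = n - 1
    · refine ⟨h, ?_⟩
      by_contra hη
      have h0 : η y = 0 := by omega
      exact hne (by rw [if_pos h, h0, hc0]; simp)
    · exact absurd (if_neg h) hne
  rw [← Finset.sum_filter_of_ne hA, ← Finset.sum_filter_of_ne hB]
  refine (Finset.sum_nbij'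
    (i := fun η : Λ → ℕ => (fun z => if z = x then η x + 1 else if z = y then η y - 1 else η z))
    (j := fun τ : Λ → ℕ => (fun z => if z = y then τ y + 1 else if z = x then τ x - 1 else τ z))
    ?_ ?_ ?_ ?_ ?_).symm
  · -- i maps into the level-n filter
    intro η hη
    rw [Finset.mem_filter] at hη ⊢
    obtain ⟨hpi, ⟨hsN, hs1⟩, hy1⟩ := hη
    have hbox : ∀ z, η z < N + 1 := fun z => Finset.mem_range.1 (Fintype.mem_piFinset.1 hpi z)
    have hxyN : η x + η y ≤ N := by
      calc η x + η y = ∑ z ∈ ({x, y} : Finset Λ), η z := (Finset.sum_pair hxy).symm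
        _ ≤ ∑ z, η z := Finset.sum_le_sum_of_subset (Finset.subset_univ _)
        _ = N := hsN
    refine ⟨?_, ⟨?_, ?_⟩, ?_⟩
    · rw [Fintype.mem_piFinset]
      intro z
      rw [Finset.mem_range]
      by_cases h1 : z = x
      · subst h1; rw [if_pos rfl]; omega
      · by_cases h2 : z = y
        · subst h2; rw [if_neg h1, if_pos rfl]; have := hbox z; omega
        · rw [if_neg h1, if_neg h2]; exact hbox z
    · dsimp only
      have := move_sum x y hxy η hy1 Finset.univ
      simp only [Finset.mem_univ, if_true] at this
      omega
    · dsimp only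
      have := move_sum x y hxy η hy1 Λ₁
      simp only [if_pos hx, if_neg hy] at this
      omega
    · dsimp only
      rw [if_pos rfl]
      omega
  · -- j maps into the level-(n-1) filter
    intro τ hτ
    rw [Finset.mem_filter] at hτ ⊢
    obtain ⟨hpi, ⟨hsN, hs1⟩, hx1⟩ := hτ
    have hbox : ∀ z, τ z < N + 1 := fun z => Finset.mem_range.1 (Fintype.mem_piFinset.1 hpi z)
    have hxyN : τ x + τ y ≤ N := by
      calc τ x + τ y = ∑ z ∈ ({x, y} : Finset Λ), τ z := (Finset.sum_pair hxy).symm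
        _ ≤ ∑ z, τ z := Finset.sum_le_sum_of_subset (Finset.subset_univ _)
        _ = N := hsN
    have hms := move_sum y x (Ne.symm hxy) τ hx1
    refine ⟨?_, ⟨?_, ?_⟩, ?_⟩
    · rw [Fintype.mem_piFinset]
      intro z
      rw [Finset.mem_range]
      by_cases h1 : z = y
      · subst h1; rw [if_pos rfl]; omega
      · by_cases h2 : z = x
        · subst h2; rw [if_neg h1, if_pos rfl]; have := hbox z; omega
        · rw [if_neg h1, if_neg h2]; exact hbox z
    · dsimp only
      have := hms Finset.univ
      simp only [Finset.mem_univ, if_true] at this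
      omega
    · dsimp only
      have := hms Λ₁
      simp only [if_pos hx, if_neg hy] at this
      omega
    · dsimp only
      rw [if_pos rfl]
      omega
  · -- left inverse
    intro η hη
    rw [Finset.mem_filter] at hη
    obtain ⟨-, -, hy1⟩ := hη
    funext z
    dsimp only
    by_cases h1 : z = y
    · subst h1
      rw [if_pos rfl, if_neg (Ne.symm hxy), if_pos rfl]
      omega
    · by_cases h2 : z = x
      · subst h2
        rw [if_neg h1, if_pos rfl, if_pos rfl]
        omega
      · simp [h1, h2]
  · -- right inverse
    intro τ hτ
    rw [Finset.mem_filter] at hτ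
    obtain ⟨-, -, hx1⟩ := hτ
    funext z
    dsimp only
    by_cases h1 : z = x
    · subst h1
      rw [if_pos rfl, if_neg hxy, if_pos rfl]
      omega
    · by_cases h2 : z = y
      · subst h2
        rw [if_neg h1, if_pos rfl, if_pos rfl]
        omega
      · simp [h1, h2]
  · -- term equality
    intro η hη
    rw [Finset.mem_filter] at hη
    obtain ⟨hpi, hcond, hy1⟩ := hη
    dsimp only
    have hbox : ∀ z, η z < N + 1 := fun z => Finset.mem_range.1 (Fintype.mem_piFinset.1 hpi z)
    have hcondA : (∑ z, (if z = x then η x + 1 else if z = y then η y - 1 else η z)) = N ∧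
        (∑ z ∈ Λ₁, (if z = x then η x + 1 else if z = y then η y - 1 else η z)) = n := by
      constructor
      · have := move_sum x y hxy η hy1 Finset.univ
        simp only [Finset.mem_univ, if_pos] at this
        omega
      · have := move_sum x y hxy η hy1 Λ₁
        simp only [if_pos hx, if_neg hy] at this
        omega
    rw [if_pos hcond, if_pos hcondA]
    rw [show (if x = x then η x + 1 else if x = y then η y - 1 else η x) = η x + 1 by simp]
    have hcy : c (η y) ≠ 0 := ne_of_gt (hcpos _ hy1)
    have hW : (∏ z, (cfact c (if z = x then η x + 1 else if z = y then η y - 1 else η z))⁻¹)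
        = (∏ z, (cfact c (η z))⁻¹) * ((c (η x + 1))⁻¹ * c (η y)) := by
      have hpt : ∀ z, (cfact c (if z = x then η x + 1 else if z = y then η y - 1 else η z))⁻¹
          = (cfact c (η z))⁻¹ *
            ((if z = x then (c (η x + 1))⁻¹ else 1) * (if z = y then c (η y) else 1)) := by
        intro z
        by_cases h1 : z = x
        · subst h1
          rw [if_pos rfl, if_pos rfl, if_neg hxy, mul_one]
          rw [show cfact c (η z + 1) = cfact c (η z) * c (η z + 1) from
            Finset.prod_range_succ _ _, mul_inv]
        · by_cases h2 : z = y
          · subst h2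
            rw [if_neg h1, if_pos rfl, if_neg h1, if_pos rfl, one_mul]
            have h4 : η z = (η z - 1) + 1 := by omega
            have h3 : cfact c (η z) = cfact c (η z - 1) * c (η z) := by
              conv_lhs => rw [h4]
              rw [show cfact c ((η z - 1) + 1) = cfact c (η z - 1) * c ((η z - 1) + 1) from
                Finset.prod_range_succ _ _, ← h4]
            rw [h3, mul_inv, mul_assoc, inv_mul_cancel₀ hcy, mul_one]
          · simp [h1, h2]
      rw [Finset.prod_congr rfl fun z _ => hpt z, Finset.prod_mul_distrib,
        Finset.prod_mul_distrib, Finset.prod_ite_eq' Finset.univ x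
          (fun _ => (c (η x + 1))⁻¹),
        Finset.prod_ite_eq' Finset.univ y (fun _ => c (η y))]
      simp
    rw [hW]
    push_cast
    rw [div_eq_mul_inv]
    ring

end ZRKey
/-- Gradient representation of `ν_Λ^N[f|η̄_{Λ₁}=n] − ν_Λ^N[f|η̄_{Λ₁}=n−1]` in terms of the
discrete gradient `∂_{yx}f(η) = f(η−δ_y+δ_x) − f(η)` and a conditional covariance, where
`h(k) = (k+1)/c(k+1)` and `y ∈ Λ₂` is arbitrary. -/
theorem gradient_representation {Λ : Type*} [Fintype Λ] [DecidableEq Λ]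
    (c : ℕ → ℝ) (hc0 : c 0 = 0) (hcpos : ∀ k, 0 < k → 0 < c k)
    (Λ₁ Λ₂ : Finset Λ) (hdisj : Disjoint Λ₁ Λ₂) (hpart : Λ₁ ∪ Λ₂ = Finset.univ)
    (hΛ₁ : Λ₁.Nonempty) (hΛ₂ : Λ₂.Nonempty)
    (N n : ℕ) (hn1 : 1 ≤ n) (hnN : n ≤ N)
    (y : Λ) (hy : y ∈ Λ₂)
    (hγ : 0 < gammaFun c Λ₁ N n) (hγ' : 0 < gammaFun c Λ₁ N (n - 1))
    (f : (Λ → ℕ) → ℝ) :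
    condExp c Λ₁ N n f - condExp c Λ₁ N (n - 1) f =
      (gammaFun c Λ₁ N (n - 1) / ((n : ℝ) * gammaFun c Λ₁ N n)) *
        (condExp c Λ₁ N (n - 1) (fun η =>
            c (η y) * ∑ x ∈ Λ₁, (((η x : ℝ) + 1) / c (η x + 1)) *
              (f (fun z => if z = x then η x + 1 else if z = y then η y - 1 else η z) - f η))
          + (condExp c Λ₁ N (n - 1) (fun η =>
                f η * (c (η y) * ∑ x ∈ Λ₁, ((η x : ℝ) + 1) / c (η x + 1)))
              - condExp c Λ₁ N (n - 1) f *
                condExp c Λ₁ N (n - 1) (fun η =>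
                  c (η y) * ∑ x ∈ Λ₁, ((η x : ℝ) + 1) / c (η x + 1)))) := by
  classical
  have hy1 : y ∉ Λ₁ := fun h => Finset.disjoint_left.1 hdisj h hy
  have hZnn := Zfull_nonneg (Λ := Λ) c hcpos N
  have hZne : Zfull c Λ N ≠ 0 := by
    intro h
    rw [gammaFun_eq, h, div_zero] at hγ
    exact lt_irrefl 0 hγ
  have hZpos : 0 < Zfull c Λ N := lt_of_le_of_ne hZnn (Ne.symm hZne)
  have hbpos : 0 < Ssum c Λ₁ N n (fun _ => 1) := by
    have h1 : gammaFun c Λ₁ N n * Zfull c Λ N = Ssum c Λ₁ N n (fun _ => 1) := by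
      rw [gammaFun_eq]
      field_simp
    rw [← h1]
    exact mul_pos hγ hZpos
  have hb'pos : 0 < Ssum c Λ₁ N (n - 1) (fun _ => 1) := by
    have h1 : gammaFun c Λ₁ N (n - 1) * Zfull c Λ N = Ssum c Λ₁ N (n - 1) (fun _ => 1) := by
      rw [gammaFun_eq]
      field_simp
    rw [← h1]
    exact mul_pos hγ' hZpos
  have hnne : (n : ℝ) ≠ 0 := Nat.cast_ne_zero.2 (by omega)
  have hk1 := zr_key c hc0 hcpos Λ₁ N n hn1 y hy1 f
  have hk2 : (n : ℝ) * Ssum c Λ₁ N n (fun _ => 1) =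
      Ssum c Λ₁ N (n - 1) (fun η =>
        c (η y) * ∑ x ∈ Λ₁, ((η x : ℝ) + 1) / c (η x + 1)) := by
    rw [zr_key c hc0 hcpos Λ₁ N n hn1 y hy1 (fun _ => 1)]
    exact Ssum_congr c Λ₁ N (n - 1) fun η => by simp
  have hk3 : Ssum c Λ₁ N (n - 1) (fun η =>
        c (η y) * ∑ x ∈ Λ₁, (((η x : ℝ) + 1) / c (η x + 1)) *
          (f (fun z => if z = x then η x + 1 else if z = y then η y - 1 else η z) - f η)) =
      Ssum c Λ₁ N (n - 1) (fun η =>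
        c (η y) * ∑ x ∈ Λ₁, (((η x : ℝ) + 1) / c (η x + 1)) *
          f (fun z => if z = x then η x + 1 else if z = y then η y - 1 else η z)) -
      Ssum c Λ₁ N (n - 1) (fun η =>
        f η * (c (η y) * ∑ x ∈ Λ₁, ((η x : ℝ) + 1) / c (η x + 1))) := by
    rw [← Ssum_sub]
    apply Ssum_congr
    intro η
    have h1 : ∑ x ∈ Λ₁, (((η x : ℝ) + 1) / c (η x + 1)) *
          (f (fun z => if z = x then η x + 1 else if z = y then η y - 1 else η z) - f η) =
        (∑ x ∈ Λ₁, (((η x : ℝ) + 1) / c (η x + 1)) *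
          f (fun z => if z = x then η x + 1 else if z = y then η y - 1 else η z)) -
        (∑ x ∈ Λ₁, ((η x : ℝ) + 1) / c (η x + 1)) * f η := by
      rw [Finset.sum_mul, ← Finset.sum_sub_distrib]
      exact Finset.sum_congr rfl fun x _ => by ring
    rw [h1]
    ring
  simp only [condExp_eq, gammaFun_eq]
  rw [hk3, ← hk1, ← hk2]
  field_simp
  ring
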